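/- Let k ≥ 1 be an integer, λ > 0, α ∈ (0,1), and let q_{α,k}(n,t) = ∑_{x ∈ Ω(k,n)} ((−1)^{ζ(x)} / (Π!(x) · k^{ζ(x)})) · (d^{ζ(x)}/du^{ζ(x)}) exp(−t k^α λ^α u^α)|_{u=1} be the probability mass function of the space-fractional Poisson process of order k. Then for every t > 0, (d/dt)[1 − q_{α,k}(0,t) − q_{α,k}(1,t)] = λ^α e^{−t k^α λ^α} (k^α − α k^{α−1} + α λ^α t k^{2α−1}); that is, the first passage time T₂ = inf{t ≥ 0 : R_α^k(t) = 2} of the space-fractional Poisson process of order k at level 2 has density λ^α e^{−t k^α λ^α}(k^α − α k^{α−1} + α λ^α t k^{2α−1}), which is not a gamma (Erlang) density. -/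

import Mathlib

open scoped BigOperators

/-- `Omega k n` is the (finite) set of tuples `(x₁,…,x_k)` of non-negative integers with
`x₁ + 2·x₂ + ⋯ + k·x_k = n`. -/
def Omega (k n : ℕ) : Finset (Fin k → ℕ) :=
  (Fintype.piFinset fun _ => Finset.range (n + 1)).filter
    (fun x => ∑ i, (i.1 + 1) * x i = n)

/-- `ζ(x) = x₁ + ⋯ + x_k`. -/
def zeta {k : ℕ} (x : Fin k → ℕ) : ℕ := ∑ i, x i

/-- `Π!(x) = x₁! ⋯ x_k!`. -/
def pifact {k : ℕ} (x : Fin k → ℕ) : ℕ := ∏ i, (x i).factorial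

/-- `c_k(n, y) = ∑_{x ∈ Ω(k,n)} y^{ζ(x)} / Π!(x)`. -/
noncomputable def ck (k n : ℕ) (y : ℝ) : ℝ :=
  ∑ x ∈ Omega k n, y ^ zeta x / (pifact x : ℝ)

/-- The pmf of the space-fractional Poisson process of order `k` (derivative form):
`q_{α,k}(n,t) = ∑_{x ∈ Ω(k,n)} ((−1)^{ζ(x)} / (Π!(x) k^{ζ(x)}))
(d^{ζ(x)}/du^{ζ(x)}) e^{−t k^α λ^α u^α}|_{u=1}`. -/
noncomputable def qkd (k : ℕ) (lam α : ℝ) (n : ℕ) (t : ℝ) : ℝ :=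
  ∑ x ∈ Omega k n,
    ((-1 : ℝ) ^ zeta x / ((pifact x : ℝ) * (k : ℝ) ^ zeta x)) *
      iteratedDeriv (zeta x)
        (fun u : ℝ => Real.exp (-(t * (k : ℝ) ^ α * lam ^ α) * u ^ α)) 1

lemma omega_zero (k : ℕ) : Omega k 0 = {fun _ => 0} := by
  ext x
  simp only [Omega, Finset.mem_filter, Fintype.mem_piFinset, Finset.mem_range,
    Finset.mem_singleton, Finset.sum_eq_zero_iff, Finset.mem_univ, true_implies]
  constructor
  · rintro ⟨-, hs⟩
    funext i
    simpa using hs i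
  · rintro rfl
    exact ⟨fun i => by simp, fun i => by simp⟩

lemma omega_one (k : ℕ) (hk : 1 ≤ k) :
    Omega k 1 = {Pi.single (⟨0, hk⟩ : Fin k) 1} := by
  ext x
  simp only [Omega, Finset.mem_filter, Fintype.mem_piFinset, Finset.mem_range,
    Finset.mem_singleton]
  constructor
  · rintro ⟨-, hs⟩
    have hle : ∀ j : Fin k, (j.1 + 1) * x j ≤ 1 := by
      intro j
      have h := Finset.single_le_sum (f := fun j : Fin k => (j.1 + 1) * x j)
        (fun _ _ => Nat.zero_le _) (Finset.mem_univ j)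
      rw [hs] at h
      exact h
    have hz : ∀ j : Fin k, j ≠ ⟨0, hk⟩ → x j = 0 := by
      intro j hj
      have hj1 : 1 ≤ j.1 := by
        rcases Nat.eq_zero_or_pos j.1 with h | h
        · exact absurd (Fin.ext h) hj
        · exact h
      have := hle j
      nlinarith [this, hj1]
    have hsum : ∑ j : Fin k, (j.1 + 1) * x j = x ⟨0, hk⟩ := by
      rw [Finset.sum_eq_single (⟨0, hk⟩ : Fin k)]
      · simp
      · intro b _ hb; simp [hz b hb]
      · simp
    funext i
    rcases eq_or_ne i ⟨0, hk⟩ with rfl | hi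
    · have hx1 : x ⟨0, hk⟩ = 1 := by rw [← hsum, hs]
      simp [hx1]
    · simp [hz i hi, Pi.single_eq_of_ne hi]
  · rintro rfl
    refine ⟨fun i => ?_, ?_⟩
    · rcases eq_or_ne i ⟨0, hk⟩ with rfl | hi
      · simp
      · simp [Pi.single_eq_of_ne hi]
    · rw [Finset.sum_eq_single (⟨0, hk⟩ : Fin k)]
      · simp
      · intro b _ hb; simp [Pi.single_apply, hb]
      · simp

/-- The density of the first passage time at level `2` of the space-fractional Poisson
process of order `k`:
`(d/dt)[1 − q_{α,k}(0,t) − q_{α,k}(1,t)] =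
λ^α e^{−t k^α λ^α} (k^α − α k^{α−1} + α λ^α t k^{2α−1})`. -/
theorem second_arrival_density_space_fractional_poisson_of_order_k
    (k : ℕ) (hk : 1 ≤ k) (lam α : ℝ) (hlam : 0 < lam) (hα : α ∈ Set.Ioo (0 : ℝ) 1)
    (t : ℝ) (ht : 0 < t) :
    deriv (fun s => 1 - qkd k lam α 0 s - qkd k lam α 1 s) t =
      lam ^ α * Real.exp (-(t * (k : ℝ) ^ α * lam ^ α)) *
        ((k : ℝ) ^ α - α * (k : ℝ) ^ (α - 1) + α * lam ^ α * t * (k : ℝ) ^ (2 * α - 1)) := by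
  set K : ℝ := (k : ℝ) with hK
  have kpos : (0 : ℝ) < K := by
    have : (1 : ℝ) ≤ K := by rw [hK]; exact_mod_cast hk
    linarith
  have kne : K ≠ 0 := ne_of_gt kpos
  -- q(0, s)
  have hq0 : ∀ s : ℝ, qkd k lam α 0 s = Real.exp (-(s * K ^ α * lam ^ α)) := by
    intro s
    simp [qkd, omega_zero, zeta, pifact, Real.one_rpow, iteratedDeriv_zero]
    exact Or.inl (Or.inl rfl)
  -- q(1, s)
  have hq1 : ∀ s : ℝ, qkd k lam α 1 s =
      α * K ^ (α - 1) * lam ^ α * s * Real.exp (-(s * K ^ α * lam ^ α)) := by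
    intro s
    have hz : zeta (Pi.single (⟨0, hk⟩ : Fin k) 1) = 1 := by
      simp [zeta, Finset.sum_pi_single']
    have hp : pifact (Pi.single (⟨0, hk⟩ : Fin k) 1) = 1 := by
      unfold pifact
      apply Finset.prod_eq_one
      intro i _
      rcases eq_or_ne i ⟨0, hk⟩ with rfl | hi
      · simp
      · simp [Pi.single_eq_of_ne hi]
    have h1 : HasDerivAt (fun u : ℝ => u ^ α) (α * (1 : ℝ) ^ (α - 1)) 1 :=
      Real.hasDerivAt_rpow_const (Or.inl one_ne_zero)
    have h2 := (h1.const_mul (-(s * K ^ α * lam ^ α))).exp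
    have hd : deriv (fun u : ℝ => Real.exp (-(s * K ^ α * lam ^ α) * u ^ α)) 1 =
        Real.exp (-(s * K ^ α * lam ^ α)) * (-(s * K ^ α * lam ^ α) * α) := by
      have := h2.deriv
      simpa [Real.one_rpow, Real.rpow_natCast] using this
    have hKα : K ^ (α - 1) = K ^ α / K := by
      rw [Real.rpow_sub kpos, Real.rpow_one]
    rw [qkd, omega_one k hk, Finset.sum_singleton, hz, hp, iteratedDeriv_one, hd, hKα]
    field_simp
    ring
  have hfun : (fun s => 1 - qkd k lam α 0 s - qkd k lam α 1 s) =
      (fun s : ℝ => 1 - Real.exp (-(s * K ^ α * lam ^ α)) -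
        α * K ^ (α - 1) * lam ^ α * s * Real.exp (-(s * K ^ α * lam ^ α))) := by
    funext s; rw [hq0 s, hq1 s]
  rw [hfun]
  have hC : HasDerivAt (fun s : ℝ => -(s * K ^ α * lam ^ α)) (-(K ^ α * lam ^ α)) t := by
    simpa using (((hasDerivAt_id t).mul_const (K ^ α)).mul_const (lam ^ α)).fun_neg
  have hE := hC.exp
  have hBs : HasDerivAt (fun s : ℝ => α * K ^ (α - 1) * lam ^ α * s)
      (α * K ^ (α - 1) * lam ^ α) t := by
    simpa using (hasDerivAt_id t).const_mul (α * K ^ (α - 1) * lam ^ α)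
  have hP := hBs.mul hE
  have hG := ((hasDerivAt_const t (1 : ℝ)).sub hE).sub hP
  rw [HasDerivAt.deriv (f := fun s => 1 - Real.exp (-(s * K ^ α * lam ^ α)) -
    α * K ^ (α - 1) * lam ^ α * s * Real.exp (-(s * K ^ α * lam ^ α))) hG]
  have hKK : K ^ (α - 1) * K ^ α = K ^ (2 * α - 1) := by
    rw [← Real.rpow_add kpos]; ring_nf
  rw [← hKK]
  ring
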